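/- arXiv:2510.17024 — 2 statements merged into one kernel-verified Lean document; each statement's English description precedes it below -/
import Mathlib

section
/- Let $\omega_t, \eta_t, \upsilon_t, \psi_t$ be nonnegative random variables adapted to a filtration $(\mathcal{F}_t)$ satisfying $\mathbb{E}[\omega_{t+1} \mid \mathcal{F}_t] \le (1 + \eta_t)\omega_t + \upsilon_t - \psi_t$ for all $t \ge 0$, with $\sum_{t=0}^\infty \eta_t < \infty$ and $\sum_{t=0}^\infty \upsilon_t < \infty$ almost surely. Then almost surely: (i) $\lim_{t\to\infty} \omega_t$ exists and is finite, and (ii) $\sum_{t=0}^\infty \psi_t < \infty$. -/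
open MeasureTheory Filter Topology

namespace RS

variable {Ω : Type*}

/-- Compounded growth factor `∏_{s<t} (1 + η s)`. -/
noncomputable def P (η : ℕ → Ω → ℝ) (t : ℕ) (a : Ω) : ℝ :=
  ∏ s ∈ Finset.range t, (1 + η s a)

/-- Discount factor. -/
noncomputable def Q (η : ℕ → Ω → ℝ) (t : ℕ) (a : Ω) : ℝ := (P η t a)⁻¹

/-- Discounted partial sums. -/
noncomputable def V (η f : ℕ → Ω → ℝ) (t : ℕ) (a : Ω) : ℝ :=
  ∑ s ∈ Finset.range t, Q η (s + 1) a * f s a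

/-- The candidate supermartingale. -/
noncomputable def X (η υ ψ ω : ℕ → Ω → ℝ) (t : ℕ) (a : Ω) : ℝ :=
  Q η t a * ω t a + V η ψ t a - V η υ t a

/-- Predictable indicator that the discounted sum of `υ` stays `≤ M`. -/
noncomputable def c (η υ : ℕ → Ω → ℝ) (M : ℕ) (t : ℕ) (a : Ω) : ℝ :=
  if V η υ (t + 1) a ≤ (M : ℝ) then 1 else 0

/-- Stopped process, as a discrete stochastic integral. -/
noncomputable def Z (η υ ψ ω : ℕ → Ω → ℝ) (M : ℕ) (t : ℕ) (a : Ω) : ℝ :=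
  X η υ ψ ω 0 a + ∑ s ∈ Finset.range t, c η υ M s a * (X η υ ψ ω (s + 1) a - X η υ ψ ω s a)

section lemmas

variable {η υ ψ ω : ℕ → Ω → ℝ} (hη : ∀ t a, 0 ≤ η t a)

include hη

theorem one_le_P (t : ℕ) (a : Ω) : 1 ≤ P η t a := by
  induction t with
  | zero => simp [P]
  | succ t ih =>
    have h1 : P η (t + 1) a = P η t a * (1 + η t a) := Finset.prod_range_succ _ _
    nlinarith [hη t a]

theorem P_pos (t : ℕ) (a : Ω) : 0 < P η t a := lt_of_lt_of_le one_pos (one_le_P hη t a)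

theorem P_mono (a : Ω) : Monotone fun t => P η t a := by
  apply monotone_nat_of_le_succ
  intro t
  have h1 : P η (t + 1) a = P η t a * (1 + η t a) := Finset.prod_range_succ _ _
  nlinarith [hη t a, one_le_P hη t a]

theorem Q_pos (t : ℕ) (a : Ω) : 0 < Q η t a := inv_pos.2 (P_pos hη t a)

theorem Q_le_one (t : ℕ) (a : Ω) : Q η t a ≤ 1 :=
  inv_le_one_of_one_le₀ (one_le_P hη t a)

theorem Q_succ_mul (t : ℕ) (a : Ω) : Q η (t + 1) a * (1 + η t a) = Q η t a := by
  have h1 : P η (t + 1) a = P η t a * (1 + η t a) := Finset.prod_range_succ _ _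
  have h2 : (0:ℝ) < 1 + η t a := by linarith [hη t a]
  rw [Q, Q, h1, mul_inv, mul_assoc, inv_mul_cancel₀ h2.ne', mul_one]

omit hη in
theorem V_succ (f : ℕ → Ω → ℝ) (t : ℕ) (a : Ω) :
    V η f (t + 1) a = V η f t a + Q η (t + 1) a * f t a := Finset.sum_range_succ _ _

theorem V_nonneg {f : ℕ → Ω → ℝ} (hf : ∀ t a, 0 ≤ f t a) (t : ℕ) (a : Ω) :
    0 ≤ V η f t a :=
  Finset.sum_nonneg fun s _ => mul_nonneg (Q_pos hη _ a).le (hf s a)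

theorem V_mono {f : ℕ → Ω → ℝ} (hf : ∀ t a, 0 ≤ f t a) (a : Ω) :
    Monotone fun t => V η f t a :=
  monotone_nat_of_le_succ fun t => by
    rw [V_succ]
    have := mul_nonneg (Q_pos hη (t+1) a).le (hf t a)
    linarith

omit hη in
theorem Z_succ (M t : ℕ) (a : Ω) :
    Z η υ ψ ω M (t + 1) a
      = Z η υ ψ ω M t a + c η υ M t a * (X η υ ψ ω (t + 1) a - X η υ ψ ω t a) := by
  rw [Z, Z, Finset.sum_range_succ]; ring

variable (hυ : ∀ t a, 0 ≤ υ t a) (hψ : ∀ t a, 0 ≤ ψ t a) (hω : ∀ t a, 0 ≤ ω t a)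

include hυ in
theorem Z_key (M : ℕ) (a : Ω) (t : ℕ) :
    (V η υ t a ≤ (M : ℝ) → Z η υ ψ ω M t a = X η υ ψ ω t a) ∧
      ∃ u, Z η υ ψ ω M t a = X η υ ψ ω u a ∧ V η υ u a ≤ (M : ℝ) := by
  induction t with
  | zero =>
    constructor
    · intro _; simp [Z]
    · exact ⟨0, by simp [Z], by simp [V]⟩
  | succ t ih =>
    rw [Z_succ]
    by_cases hc : V η υ (t + 1) a ≤ (M : ℝ)
    · have hVt : V η υ t a ≤ (M : ℝ) := le_trans (V_mono hη hυ a (Nat.le_succ t)) hc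
      have hZt : Z η υ ψ ω M t a = X η υ ψ ω t a := ih.1 hVt
      have hc1 : c η υ M t a = 1 := if_pos hc
      have hZ : Z η υ ψ ω M t a + c η υ M t a * (X η υ ψ ω (t + 1) a - X η υ ψ ω t a)
          = X η υ ψ ω (t + 1) a := by rw [hZt, hc1]; ring
      exact ⟨fun _ => hZ, ⟨t + 1, hZ, hc⟩⟩
    · have hc0 : c η υ M t a = 0 := if_neg hc
      rw [hc0, zero_mul, add_zero]
      exact ⟨fun h => absurd h hc, ih.2⟩

include hυ hψ hω in
theorem X_lower (t : ℕ) (a : Ω) : -V η υ t a ≤ X η υ ψ ω t a := by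
  have h1 := mul_nonneg (Q_pos hη t a).le (hω t a)
  have h2 := V_nonneg hη hψ t a
  rw [X]; linarith

include hυ hψ hω in
theorem neg_le_Z (M : ℕ) (a : Ω) (t : ℕ) : -(M : ℝ) ≤ Z η υ ψ ω M t a := by
  obtain ⟨u, hu, hVu⟩ := (Z_key hη hυ M a t (ψ := ψ) (ω := ω)).2
  rw [hu]
  have := X_lower hη hυ hψ hω u a
  linarith

include hυ in
theorem Z_eq_X (M : ℕ) (a : Ω) (hA : ∀ t, V η υ t a ≤ (M : ℝ)) (t : ℕ) :
    Z η υ ψ ω M t a = X η υ ψ ω t a :=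
  (Z_key hη hυ M a t).1 (hA t)

end lemmas

section measure

variable {mΩ : MeasurableSpace Ω} {μ : Measure Ω} [IsProbabilityMeasure μ]
  {ℱ : Filtration ℕ mΩ} {η υ ψ ω : ℕ → Ω → ℝ}

theorem P_meas (hηa : Adapted ℱ η) {t u : ℕ} (htu : t ≤ u + 1) :
    Measurable[ℱ u] (P η t) := by
  show Measurable[ℱ u] fun a => ∏ s ∈ Finset.range t, (1 + η s a)
  apply Finset.measurable_prod
  intro s hs
  have hsu : s ≤ u := by
    have := Finset.mem_range.1 hs; omega
  exact measurable_const.add ((hηa s).mono (ℱ.mono hsu) le_rfl)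

theorem Q_meas (hηa : Adapted ℱ η) {t u : ℕ} (htu : t ≤ u + 1) :
    Measurable[ℱ u] (Q η t) := (P_meas hηa htu).inv

theorem V_meas (hηa : Adapted ℱ η) {f : ℕ → Ω → ℝ} (hfa : Adapted ℱ f)
    {t u : ℕ} (htu : t ≤ u + 1) : Measurable[ℱ u] (V η f t) := by
  show Measurable[ℱ u] fun a => ∑ s ∈ Finset.range t, Q η (s + 1) a * f s a
  apply Finset.measurable_sum
  intro s hs
  have hsu : s ≤ u := by
    have := Finset.mem_range.1 hs; omega
  exact (Q_meas hηa (by omega)).mul ((hfa s).mono (ℱ.mono hsu) le_rfl)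

theorem X_meas (hηa : Adapted ℱ η) (hυa : Adapted ℱ υ) (hψa : Adapted ℱ ψ)
    (hωa : Adapted ℱ ω) (t : ℕ) : Measurable[ℱ t] (X η υ ψ ω t) := by
  show Measurable[ℱ t] fun a => Q η t a * ω t a + V η ψ t a - V η υ t a
  exact (((Q_meas hηa t.le_succ).mul (hωa t)).add
    (V_meas hηa hψa t.le_succ)).sub (V_meas hηa hυa t.le_succ)

theorem c_meas (hηa : Adapted ℱ η) (hυa : Adapted ℱ υ) (M t : ℕ) :
    Measurable[ℱ t] (c η υ M t) := by
  show Measurable[ℱ t] fun a => if V η υ (t + 1) a ≤ (M : ℝ) then (1:ℝ) else 0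
  exact Measurable.ite (measurableSet_le (V_meas hηa hυa le_rfl) measurable_const)
    measurable_const measurable_const

theorem Z_meas (hηa : Adapted ℱ η) (hυa : Adapted ℱ υ) (hψa : Adapted ℱ ψ)
    (hωa : Adapted ℱ ω) (M t : ℕ) : Measurable[ℱ t] (Z η υ ψ ω M t) := by
  show Measurable[ℱ t] fun a =>
    X η υ ψ ω 0 a + ∑ s ∈ Finset.range t, c η υ M s a * (X η υ ψ ω (s + 1) a - X η υ ψ ω s a)
  apply ((X_meas hηa hυa hψa hωa 0).mono (ℱ.mono (Nat.zero_le t)) le_rfl).add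
  apply Finset.measurable_sum
  intro s hs
  have hst : s + 1 ≤ t := Finset.mem_range.1 hs
  have hX1 : Measurable[ℱ t] (X η υ ψ ω (s + 1)) :=
    (X_meas hηa hυa hψa hωa (s + 1)).mono (ℱ.mono hst) le_rfl
  have hX0 : Measurable[ℱ t] (X η υ ψ ω s) :=
    (X_meas hηa hυa hψa hωa s).mono (ℱ.mono (by omega)) le_rfl
  exact ((c_meas hηa hυa M s).mono (ℱ.mono (by omega)) le_rfl).mul (hX1.sub hX0)

variable (hη : ∀ t a, 0 ≤ η t a)

include hη

theorem bdd_mul_int {f : ℕ → Ω → ℝ} (hfi : ∀ t, Integrable (f t) μ)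
    (hηa : Adapted ℱ η) (s t : ℕ) :
    Integrable (fun a => Q η s a * f t a) μ := by
  refine (hfi t).bdd_mul ?_ (c := 1) (ae_of_all _ fun x => ?_)
  · exact ((Q_meas hηa (Nat.le_succ s) : Measurable[ℱ s] (Q η s)).mono
      (ℱ.le s) le_rfl).aestronglyMeasurable
  · rw [Real.norm_eq_abs, abs_of_nonneg (Q_pos hη s x).le]
    exact Q_le_one hη s x

theorem V_int {f : ℕ → Ω → ℝ} (hfi : ∀ t, Integrable (f t) μ)
    (hηa : Adapted ℱ η) (t : ℕ) : Integrable (V η f t) μ := by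
  show Integrable (fun a => ∑ s ∈ Finset.range t, Q η (s + 1) a * f s a) μ
  exact integrable_finset_sum _ fun s _ => bdd_mul_int hη hfi hηa (s + 1) s

theorem X_int (hηa : Adapted ℱ η)
    (hωi : ∀ t, Integrable (ω t) μ) (hυi : ∀ t, Integrable (υ t) μ)
    (hψi : ∀ t, Integrable (ψ t) μ) (t : ℕ) : Integrable (X η υ ψ ω t) μ := by
  show Integrable (fun a => Q η t a * ω t a + V η ψ t a - V η υ t a) μ
  exact ((bdd_mul_int hη hωi hηa t t).add (V_int hη hψi hηa t)).sub (V_int hη hυi hηa t)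

theorem Z_int (hηa : Adapted ℱ η) (hυa : Adapted ℱ υ)
    (hωi : ∀ t, Integrable (ω t) μ) (hυi : ∀ t, Integrable (υ t) μ)
    (hψi : ∀ t, Integrable (ψ t) μ) (M t : ℕ) : Integrable (Z η υ ψ ω M t) μ := by
  show Integrable (fun a =>
    X η υ ψ ω 0 a + ∑ s ∈ Finset.range t,
      c η υ M s a * (X η υ ψ ω (s + 1) a - X η υ ψ ω s a)) μ
  refine (X_int hη hηa hωi hυi hψi 0).add ?_
  refine integrable_finset_sum _ fun s _ => ?_
  refine (((X_int hη hηa hωi hυi hψi (s+1)).sub (X_int hη hηa hωi hυi hψi s)).bdd_mul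
    ?_ (c := 1) (ae_of_all _ fun x => ?_))
  · exact ((c_meas hηa hυa M s).mono (ℱ.le s) le_rfl).aestronglyMeasurable
  · rw [Real.norm_eq_abs, c]
    split <;> simp

omit hη in
theorem c_nonneg (M t : ℕ) (a : Ω) : 0 ≤ c η υ M t a := by
  rw [c]; split <;> norm_num

omit hη in
theorem c_le_one (M t : ℕ) (a : Ω) : c η υ M t a ≤ 1 := by
  rw [c]; split <;> norm_num

theorem c_mul_int (hυa : Adapted ℱ υ) (hηa : Adapted ℱ η) (M t : ℕ) {f : Ω → ℝ}
    (hf : Integrable f μ) : Integrable (fun a => c η υ M t a * f a) μ := by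
  refine hf.bdd_mul ((c_meas hηa hυa M t).mono (ℱ.le t) le_rfl).aestronglyMeasurable
    (c := 1) (ae_of_all _ fun x => ?_)
  rw [Real.norm_eq_abs, abs_of_nonneg (c_nonneg M t x)]
  exact c_le_one M t x

variable (hηa : Adapted ℱ η) (hυa : Adapted ℱ υ) (hψa : Adapted ℱ ψ) (hωa : Adapted ℱ ω)
  (hωi : ∀ t, Integrable (ω t) μ) (hυi : ∀ t, Integrable (υ t) μ)
  (hψi : ∀ t, Integrable (ψ t) μ)
  (hrec : ∀ t, μ[ω (t + 1) | ℱ t] ≤ᵐ[μ]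
    fun a => (1 + η t a) * ω t a + υ t a - ψ t a)

include hηa hυa hψa hωa hωi hυi hψi hrec

theorem X_step (t : ℕ) : μ[X η υ ψ ω (t + 1)|ℱ t] ≤ᵐ[μ] X η υ ψ ω t := by
  set g : Ω → ℝ := fun a => V η ψ (t + 1) a - V η υ (t + 1) a with hgdef
  have hXeq : X η υ ψ ω (t + 1) = (fun a => Q η (t + 1) a * ω (t + 1) a) + g := by
    funext a; simp only [X, Pi.add_apply, hgdef]; ring
  have hgm : StronglyMeasurable[ℱ t] g :=
    ((V_meas hηa hψa le_rfl).sub (V_meas hηa hυa le_rfl)).stronglyMeasurable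
  have hgi : Integrable g μ := (V_int hη hψi hηa (t + 1)).sub (V_int hη hυi hηa (t + 1))
  have hQm : StronglyMeasurable[ℱ t] (Q η (t + 1)) :=
    (Q_meas hηa le_rfl).stronglyMeasurable
  have hQωi : Integrable (fun a => Q η (t + 1) a * ω (t + 1) a) μ :=
    bdd_mul_int hη hωi hηa (t + 1) (t + 1)
  have h1 : μ[X η υ ψ ω (t + 1)|ℱ t] =ᵐ[μ]
      μ[fun a => Q η (t + 1) a * ω (t + 1) a|ℱ t] + μ[g|ℱ t] := by
    rw [hXeq]; exact condExp_add hQωi hgi _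
  have h2 : μ[fun a => Q η (t + 1) a * ω (t + 1) a|ℱ t]
      =ᵐ[μ] Q η (t + 1) * μ[ω (t + 1)|ℱ t] := by
    have := condExp_mul_of_stronglyMeasurable_left hQm
      (by exact hQωi) (hωi (t + 1))
    exact this
  have h3 : μ[g|ℱ t] = g := condExp_of_stronglyMeasurable (ℱ.le t) hgm hgi
  filter_upwards [h1, h2, hrec t] with a ha1 ha2 ha3
  rw [ha1]
  simp only [Pi.add_apply]
  rw [ha2, h3]
  simp only [Pi.mul_apply]
  have hq := (Q_pos hη (t + 1) a).le
  have hmul := mul_le_mul_of_nonneg_left ha3 hq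
  have hid := Q_succ_mul hη t a
  have hexp : Q η (t + 1) a * ((1 + η t a) * ω t a + υ t a - ψ t a) + g a
      = X η υ ψ ω t a := by
    simp only [hgdef, X, V_succ]
    linear_combination (ω t a) * hid
  linarith

theorem Z_step (M t : ℕ) : μ[Z η υ ψ ω M (t + 1)|ℱ t] ≤ᵐ[μ] Z η υ ψ ω M t := by
  set g : Ω → ℝ := fun a => Z η υ ψ ω M t a - c η υ M t a * X η υ ψ ω t a with hgdef
  have hZeq : Z η υ ψ ω M (t + 1) = g + fun a => c η υ M t a * X η υ ψ ω (t + 1) a := by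
    funext a; simp only [Pi.add_apply, hgdef, Z_succ]; ring
  have hgm : StronglyMeasurable[ℱ t] g :=
    ((Z_meas hηa hυa hψa hωa M t).sub
      ((c_meas hηa hυa M t).mul (X_meas hηa hυa hψa hωa t))).stronglyMeasurable
  have hgi : Integrable g μ := (Z_int hη hηa hυa hωi hυi hψi M t).sub
    (c_mul_int hη hυa hηa M t (X_int hη hηa hωi hυi hψi t))
  have hcXi : Integrable (fun a => c η υ M t a * X η υ ψ ω (t + 1) a) μ :=
    c_mul_int hη hυa hηa M t (X_int hη hηa hωi hυi hψi (t + 1))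
  have h1 : μ[Z η υ ψ ω M (t + 1)|ℱ t] =ᵐ[μ]
      μ[g|ℱ t] + μ[fun a => c η υ M t a * X η υ ψ ω (t + 1) a|ℱ t] := by
    rw [hZeq]; exact condExp_add hgi hcXi _
  have h2 : μ[fun a => c η υ M t a * X η υ ψ ω (t + 1) a|ℱ t]
      =ᵐ[μ] c η υ M t * μ[X η υ ψ ω (t + 1)|ℱ t] := by
    have := condExp_mul_of_stronglyMeasurable_left (c_meas hηa hυa M t).stronglyMeasurable
      (by exact hcXi) (X_int hη hηa hωi hυi hψi (t + 1))
    exact this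
  have h3 : μ[g|ℱ t] = g := condExp_of_stronglyMeasurable (ℱ.le t) hgm hgi
  filter_upwards [h1, h2, X_step hη hηa hυa hψa hωa hωi hυi hψi hrec t] with a ha1 ha2 ha3
  rw [ha1]
  simp only [Pi.add_apply]
  rw [h3, ha2]
  simp only [Pi.mul_apply]
  have hc := c_nonneg (η := η) (υ := υ) M t a
  have hmul := mul_le_mul_of_nonneg_left ha3 hc
  simp only [hgdef]
  linarith

theorem Z_supermartingale (M : ℕ) : Supermartingale (Z η υ ψ ω M) ℱ μ :=
  supermartingale_nat (fun t => (Z_meas hηa hυa hψa hωa M t).stronglyMeasurable)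
    (fun t => Z_int hη hηa hυa hωi hυi hψi M t)
    (fun t => Z_step hη hηa hυa hψa hωa hωi hυi hψi hrec M t)

theorem integral_Z_le (M t : ℕ) : ∫ a, Z η υ ψ ω M t a ∂μ ≤ ∫ a, ω 0 a ∂μ := by
  induction t with
  | zero =>
    have hz : Z η υ ψ ω M 0 = ω 0 := by
      funext a; simp [Z, X, V, Q, P]
    rw [hz]
  | succ t ih =>
    have h1 : ∫ a, Z η υ ψ ω M (t + 1) a ∂μ
        = ∫ a, (μ[Z η υ ψ ω M (t + 1)|ℱ t]) a ∂μ := (integral_condExp (ℱ.le t)).symm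
    rw [h1]
    exact le_trans (integral_mono_ae integrable_condExp
      (Z_int hη hηa hυa hωi hυi hψi M t)
      (Z_step hη hηa hυa hψa hωa hωi hυi hψi hrec M t)) ih

theorem Z_tendsto (hυ0 : ∀ t a, 0 ≤ υ t a) (hψ0 : ∀ t a, 0 ≤ ψ t a)
    (hω0 : ∀ t a, 0 ≤ ω t a) (M : ℕ) :
    ∀ᵐ a ∂μ, ∃ l : ℝ, Tendsto (fun t => Z η υ ψ ω M t a) atTop (𝓝 l) := by
  set R : NNReal := Real.toNNReal (∫ a, ω 0 a ∂μ + 2 * M) with hR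
  have hlb : ∀ t a, -(M : ℝ) ≤ Z η υ ψ ω M t a := fun t a =>
    neg_le_Z hη hυ0 hψ0 hω0 M a t
  have hbdd : ∀ n, eLpNorm (Z η υ ψ ω M n) 1 μ ≤ (R : ENNReal) := by
    intro n
    have hint := Z_int hη hηa hυa hωi hυi hψi M n
    have h1 : eLpNorm (Z η υ ψ ω M n) 1 μ
        = ENNReal.ofReal (∫ a, ‖Z η υ ψ ω M n a‖ ∂μ) := by
      rw [ofReal_integral_norm_eq_lintegral_enorm hint, eLpNorm_one_eq_lintegral_enorm]
    have h2 : ∫ a, ‖Z η υ ψ ω M n a‖ ∂μ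
        ≤ ∫ a, (Z η υ ψ ω M n a + 2 * M) ∂μ := by
      apply integral_mono hint.norm (hint.add (integrable_const _))
      intro a
      have := hlb n a
      show ‖Z η υ ψ ω M n a‖ ≤ Z η υ ψ ω M n a + 2 * M
      rw [Real.norm_eq_abs]
      exact abs_le.2 ⟨by linarith, by linarith⟩
    have h3 : ∫ a, (Z η υ ψ ω M n a + 2 * M) ∂μ = (∫ a, Z η υ ψ ω M n a ∂μ) + 2 * M := by
      rw [integral_add hint (integrable_const _), integral_const, probReal_univ]
      simp
    have h4 : ∫ a, ‖Z η υ ψ ω M n a‖ ∂μ ≤ ∫ a, ω 0 a ∂μ + 2 * M := by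
      have := integral_Z_le hη hηa hυa hψa hωa hωi hυi hψi hrec M n
      linarith [h2, h3.le]
    rw [h1, hR]
    exact le_trans (ENNReal.ofReal_le_ofReal h4) (le_of_eq rfl)
  have hsub : Submartingale (-Z η υ ψ ω M) ℱ μ :=
    (Z_supermartingale hη hηa hυa hψa hωa hωi hυi hψi hrec M).neg
  have hconv := hsub.exists_ae_tendsto_of_bdd (R := R) (fun n => by
    have : (-Z η υ ψ ω M) n = -(Z η υ ψ ω M n) := rfl
    rw [this, eLpNorm_neg]
    exact hbdd n)
  filter_upwards [hconv] with a ha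
  obtain ⟨l, hl⟩ := ha
  refine ⟨-l, ?_⟩
  have := hl.neg
  simp only [Pi.neg_apply, neg_neg] at this ⊢
  exact this

end measure

section final

variable {η υ ψ ω : ℕ → Ω → ℝ}

theorem final_pointwise (hη : ∀ t a, 0 ≤ η t a) (hυ0 : ∀ t a, 0 ≤ υ t a)
    (hψ0 : ∀ t a, 0 ≤ ψ t a) (hω0 : ∀ t a, 0 ≤ ω t a) (a : Ω)
    (hsη : Summable fun t => η t a) (hsυ : Summable fun t => υ t a)
    (hZc : ∀ M : ℕ, ∃ l : ℝ, Tendsto (fun t => Z η υ ψ ω M t a) atTop (𝓝 l)) :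
    (∃ l : ℝ, Tendsto (fun t => ω t a) atTop (𝓝 l)) ∧ Summable fun t => ψ t a := by
  have hPb : ∀ t, P η t a ≤ Real.exp (∑' s, η s a) := by
    intro t
    have h1 : P η t a ≤ ∏ s ∈ Finset.range t, Real.exp (η s a) := by
      rw [P]
      apply Finset.prod_le_prod (fun i _ => by linarith [hη i a])
      intro i _
      rw [add_comm]
      exact Real.add_one_le_exp _
    rw [← Real.exp_sum] at h1
    exact h1.trans (Real.exp_le_exp.2 (Summable.sum_le_tsum _ (fun i _ => hη i a) hsη))
  have hPm := P_mono hη (a := a) (η := η)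
  have hPbdd : BddAbove (Set.range fun t => P η t a) :=
    ⟨Real.exp (∑' s, η s a), by rintro y ⟨t, rfl⟩; exact hPb t⟩
  have hPL : Tendsto (fun t => P η t a) atTop (𝓝 (⨆ t, P η t a)) :=
    tendsto_atTop_ciSup hPm hPbdd
  set L := ⨆ t, P η t a with hLdef
  have hPleL : ∀ t, P η t a ≤ L := fun t => le_ciSup hPbdd t
  set M := ⌈∑' s, υ s a⌉₊ with hM
  have hVυb : ∀ t, V η υ t a ≤ (M : ℝ) := by
    intro t
    have h1 : V η υ t a ≤ ∑ s ∈ Finset.range t, υ s a := by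
      rw [V]
      exact Finset.sum_le_sum fun s _ =>
        mul_le_of_le_one_left (hυ0 s a) (Q_le_one hη _ a)
    exact h1.trans ((Summable.sum_le_tsum _ (fun i _ => hυ0 i a) hsυ).trans (Nat.le_ceil _))
  obtain ⟨l, hl⟩ := hZc M
  have hXl : Tendsto (fun t => X η υ ψ ω t a) atTop (𝓝 l) :=
    hl.congr fun t => Z_eq_X hη hυ0 M a hVυb t
  have hVυconv : Tendsto (fun t => V η υ t a) atTop (𝓝 (⨆ t, V η υ t a)) :=
    tendsto_atTop_ciSup (V_mono hη hυ0 a) ⟨(M : ℝ), by rintro y ⟨t, rfl⟩; exact hVυb t⟩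
  obtain ⟨B, hB⟩ := hXl.bddAbove_range
  have hVψb : ∀ t, V η ψ t a ≤ B + M := by
    intro t
    have h1 : X η υ ψ ω t a ≤ B := hB ⟨t, rfl⟩
    have h2 := mul_nonneg (Q_pos hη t a).le (hω0 t a)
    have h3 := hVυb t
    simp only [X] at h1
    linarith
  have hVψconv : Tendsto (fun t => V η ψ t a) atTop (𝓝 (⨆ t, V η ψ t a)) :=
    tendsto_atTop_ciSup (V_mono hη hψ0 a) ⟨B + M, by rintro y ⟨t, rfl⟩; exact hVψb t⟩
  constructor
  · have hQω : Tendsto (fun t => Q η t a * ω t a) atTop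
        (𝓝 (l - (⨆ t, V η ψ t a) + ⨆ t, V η υ t a)) := by
      apply ((hXl.sub hVψconv).add hVυconv).congr
      intro t
      simp only [X]
      ring
    refine ⟨L * (l - (⨆ t, V η ψ t a) + ⨆ t, V η υ t a), (hPL.mul hQω).congr fun t => ?_⟩
    simp only [Q]
    rw [← mul_assoc, mul_inv_cancel₀ (P_pos hη t a).ne', one_mul]
  · have hsQψ : Summable fun s => Q η (s + 1) a * ψ s a :=
      summable_of_sum_range_le
        (fun s => mul_nonneg (Q_pos hη _ a).le (hψ0 s a)) (fun t => hVψb t)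
    apply Summable.of_nonneg_of_le (fun s => hψ0 s a) (fun s => ?_) (hsQψ.mul_left L)
    have h1 : P η (s + 1) a * (Q η (s + 1) a * ψ s a) = ψ s a := by
      simp only [Q]
      rw [← mul_assoc, mul_inv_cancel₀ (P_pos hη _ a).ne', one_mul]
    calc ψ s a = P η (s + 1) a * (Q η (s + 1) a * ψ s a) := h1.symm
      _ ≤ L * (Q η (s + 1) a * ψ s a) :=
        mul_le_mul_of_nonneg_right (hPleL (s + 1))
          (mul_nonneg (Q_pos hη _ a).le (hψ0 s a))

end final

end RS

theorem stmt_11 {Ω : Type*} {mΩ : MeasurableSpace Ω} {μ : Measure Ω}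
    [IsProbabilityMeasure μ] (ℱ : Filtration ℕ mΩ)
    (ω η υ ψ : ℕ → Ω → ℝ)
    (hω_adapted : Adapted ℱ ω) (hη_adapted : Adapted ℱ η)
    (hυ_adapted : Adapted ℱ υ) (hψ_adapted : Adapted ℱ ψ)
    (hω_int : ∀ t, Integrable (ω t) μ) (hη_int : ∀ t, Integrable (η t) μ)
    (hυ_int : ∀ t, Integrable (υ t) μ) (hψ_int : ∀ t, Integrable (ψ t) μ)
    (hω_nonneg : ∀ t, 0 ≤ ω t) (hη_nonneg : ∀ t, 0 ≤ η t)
    (hυ_nonneg : ∀ t, 0 ≤ υ t) (hψ_nonneg : ∀ t, 0 ≤ ψ t)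
    (hrec : ∀ t, μ[ω (t + 1) | ℱ t] ≤ᵐ[μ]
      fun a => (1 + η t a) * ω t a + υ t a - ψ t a)
    (hη_sum : ∀ᵐ a ∂μ, Summable (fun t => η t a))
    (hυ_sum : ∀ᵐ a ∂μ, Summable (fun t => υ t a)) :
    ∀ᵐ a ∂μ,
      (∃ l : ℝ, Tendsto (fun t => ω t a) atTop (nhds l)) ∧
      Summable (fun t => ψ t a) := by
  have hη' : ∀ t a, 0 ≤ η t a := fun t a => hη_nonneg t a
  have hυ' : ∀ t a, 0 ≤ υ t a := fun t a => hυ_nonneg t a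
  have hψ' : ∀ t a, 0 ≤ ψ t a := fun t a => hψ_nonneg t a
  have hω' : ∀ t a, 0 ≤ ω t a := fun t a => hω_nonneg t a
  have hZc : ∀ M : ℕ, ∀ᵐ a ∂μ, ∃ l : ℝ,
      Tendsto (fun t => RS.Z η υ ψ ω M t a) atTop (𝓝 l) := fun M =>
    RS.Z_tendsto hη' hη_adapted hυ_adapted hψ_adapted hω_adapted
      hω_int hυ_int hψ_int hrec hυ' hψ' hω' M
  filter_upwards [hη_sum, hυ_sum, ae_all_iff.2 hZc] with a hsη hsυ hZa
  exact RS.final_pointwise hη' hυ' hψ' hω' a hsη hsυ hZa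
end

section
/- Deterministic version of Robbins–Siegmund: let $\omega_t, \eta_t, \upsilon_t, \psi_t \ge 0$ be real sequences with $\omega_{t+1} \le (1+\eta_t)\omega_t + \upsilon_t - \psi_t$ for all $t \ge 0$, $\sum_t \eta_t < \infty$, and $\sum_t \upsilon_t < \infty$. Then $\lim_{t\to\infty}\omega_t$ exists and is finite, and $\sum_{t=0}^\infty \psi_t < \infty$. -/
open Filter

theorem stmt_12 (ω η υ ψ : ℕ → ℝ)
    (hω : ∀ t, 0 ≤ ω t) (hη : ∀ t, 0 ≤ η t) (hυ : ∀ t, 0 ≤ υ t)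
    (hψ : ∀ t, 0 ≤ ψ t)
    (hrec : ∀ t, ω (t + 1) ≤ (1 + η t) * ω t + υ t - ψ t)
    (hη_sum : Summable η) (hυ_sum : Summable υ) :
    (∃ l : ℝ, Tendsto ω atTop (nhds l)) ∧ Summable ψ := by
  set P : ℕ → ℝ := fun t => ∏ s ∈ Finset.range t, (1 + η s) with hPdef
  have hP1 : ∀ t, 1 ≤ P t := by
    intro t
    show (1:ℝ) ≤ ∏ s ∈ Finset.range t, (1 + η s)
    induction t with
    | zero => simp
    | succ n ih => rw [Finset.prod_range_succ]; nlinarith [hη n]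
  have hPpos : ∀ t, 0 < P t := fun t => lt_of_lt_of_le one_pos (hP1 t)
  have hPsucc : ∀ t, P (t + 1) = P t * (1 + η t) := fun t => Finset.prod_range_succ _ t
  have hPmono : Monotone P := monotone_nat_of_le_succ fun t => by
    rw [hPsucc]; nlinarith [hPpos t, hη t]
  set C : ℝ := Real.exp (∑' t, η t) with hCdef
  have hPle : ∀ t, P t ≤ C := by
    intro t
    calc P t ≤ ∏ s ∈ Finset.range t, Real.exp (η s) :=
          Finset.prod_le_prod (fun s _ => by linarith [hη s])
            (fun s _ => by linarith [Real.add_one_le_exp (η s)])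
      _ = Real.exp (∑ s ∈ Finset.range t, η s) := (Real.exp_sum _ _).symm
      _ ≤ C := Real.exp_le_exp.mpr (Summable.sum_le_tsum _ (fun s _ => hη s) hη_sum)
  have hPlim : Tendsto P atTop (nhds (⨆ t, P t)) :=
    tendsto_atTop_ciSup hPmono ⟨C, by rintro _ ⟨t, rfl⟩; exact hPle t⟩
  set V : ℕ → ℝ := fun t => ω t / P t with hVdef
  have hVnonneg : ∀ t, 0 ≤ V t := fun t => div_nonneg (hω t) (hPpos t).le
  set g : ℕ → ℝ := fun t => ψ t / P (t + 1) with hgdef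
  have hgnonneg : ∀ t, 0 ≤ g t := fun t => div_nonneg (hψ t) (hPpos (t + 1)).le
  have key : ∀ t, V (t + 1) + g t ≤ V t + υ t := by
    intro t
    have e : V t * P (t + 1) = (1 + η t) * ω t := by
      rw [hPsucc]
      have h : V t * P t = ω t := div_mul_cancel₀ _ (hPpos t).ne'
      rw [← mul_assoc, h]; ring
    have h1 : V (t + 1) + g t = (ω (t + 1) + ψ t) / P (t + 1) := by
      simp only [hVdef, hgdef, ← add_div]
    rw [h1, div_le_iff₀ (hPpos (t + 1))]
    nlinarith [hrec t, hP1 (t + 1), hυ t, e]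
  set M : ℕ → ℝ := fun t =>
    V t + (∑ s ∈ Finset.range t, g s) - ∑ s ∈ Finset.range t, υ s with hMdef
  have hMant : Antitone M := antitone_nat_of_succ_le fun t => by
    simp only [hMdef, Finset.sum_range_succ]
    linarith [key t]
  have hMle : ∀ t, M t ≤ ω 0 := by
    intro t
    have h := hMant (Nat.zero_le t)
    have hV0 : V 0 = ω 0 := by simp [hVdef, hPdef]
    simp only [hMdef, Finset.range_zero, Finset.sum_empty, add_zero, sub_zero, hV0] at h
    exact h
  have hMlb : ∀ t, -(∑' s, υ s) ≤ M t := by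
    intro t
    have h1 : (∑ s ∈ Finset.range t, υ s) ≤ ∑' s, υ s :=
      Summable.sum_le_tsum _ (fun s _ => hυ s) hυ_sum
    have h2 : 0 ≤ ∑ s ∈ Finset.range t, g s :=
      Finset.sum_nonneg fun s _ => hgnonneg s
    have := hVnonneg t
    simp only [hMdef]
    linarith
  have hMlim : Tendsto M atTop (nhds (⨅ t, M t)) :=
    tendsto_atTop_ciInf hMant ⟨-(∑' s, υ s), by rintro _ ⟨t, rfl⟩; exact hMlb t⟩
  have hg_sum : Summable g := by
    apply summable_of_sum_range_le (c := ω 0 + ∑' s, υ s) hgnonneg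
    intro t
    have h1 : (∑ s ∈ Finset.range t, υ s) ≤ ∑' s, υ s :=
      Summable.sum_le_tsum _ (fun s _ => hυ s) hυ_sum
    have h2 := hMle t
    have h3 := hVnonneg t
    simp only [hMdef] at h2
    linarith
  have hψ_sum : Summable ψ := by
    apply Summable.of_nonneg_of_le hψ (fun t => ?_) (hg_sum.mul_right C)
    have e : g t * P (t + 1) = ψ t := div_mul_cancel₀ _ (hPpos (t + 1)).ne'
    calc ψ t = g t * P (t + 1) := e.symm
      _ ≤ g t * C := mul_le_mul_of_nonneg_left (hPle (t + 1)) (hgnonneg t)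
  refine ⟨?_, hψ_sum⟩
  have hSg : Tendsto (fun t => ∑ s ∈ Finset.range t, g s) atTop (nhds (∑' s, g s)) :=
    hg_sum.hasSum.tendsto_sum_nat
  have hSυ : Tendsto (fun t => ∑ s ∈ Finset.range t, υ s) atTop (nhds (∑' s, υ s)) :=
    hυ_sum.hasSum.tendsto_sum_nat
  have hVlim : Tendsto V atTop (nhds ((⨅ t, M t) - (∑' s, g s) + ∑' s, υ s)) := by
    have : ∀ t, V t = M t - (∑ s ∈ Finset.range t, g s) + ∑ s ∈ Finset.range t, υ s := by
      intro t; simp only [hMdef]; ring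
    exact Tendsto.congr (fun t => (this t).symm) ((hMlim.sub hSg).add hSυ)
  refine ⟨((⨅ t, M t) - (∑' s, g s) + ∑' s, υ s) * (⨆ t, P t), ?_⟩
  have : ∀ t, ω t = V t * P t := fun t => (div_mul_cancel₀ _ (hPpos t).ne').symm
  exact Tendsto.congr (fun t => (this t).symm) (hVlim.mul hPlim)
end
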